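/- For every z > 0 with z ≠ 1, K > 0, and N > 1, the vector with components n̄_ℓ = (K z^M + z^ℓ (z - 1 - K)) / (K z^N + z - 1 - K) for ℓ = 1, ..., M (with M = N+1) is an equilibrium of the modified Becker–Döring system: all fluxes J_ℓ = n̄_ℓ n̄_1 - n̄_{ℓ+1} are equal to the common value J = (z² - z)(1 - α) where α = (z - 1 - K)/(K z^N + z - 1 - K), and J = K n̄_M. -/
import Mathlib


/-- The explicit family of equilibria of the modified Becker–Döring system. -/
theorem equilibria_formula
    (N : ℕ) (hN : 1 < N) (M : ℕ) (hM : M = N + 1)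
    (K z : ℝ) (hK : 0 < K) (hz : 0 < z) (hz1 : z ≠ 1)
    (α J : ℝ)
    (hα : α = (z - 1 - K) / (K * z ^ N + z - 1 - K))
    (hJ : J = (z ^ 2 - z) * (1 - α))
    (nbar : ℕ → ℝ)
    (hn : ∀ ℓ, nbar ℓ = (K * z ^ M + z ^ ℓ * (z - 1 - K)) / (K * z ^ N + z - 1 - K)) :
    (∀ ℓ, 1 ≤ ℓ → ℓ ≤ N → nbar ℓ * nbar 1 - nbar (ℓ + 1) = J) ∧ J = K * nbar M := by
  subst hM
  have hD : K * z ^ N + z - 1 - K ≠ 0 := by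
    rcases lt_or_gt_of_ne hz1 with h | h
    · have h1 : z ^ N < 1 := pow_lt_one₀ hz.le h (by omega)
      nlinarith
    · have h1 : 1 < z ^ N := one_lt_pow₀ h (by omega)
      nlinarith
  constructor
  · intro ℓ h1 h2
    rw [hn, hn, hn, hJ, hα]
    have e1 : z ^ (ℓ + 1) = z ^ ℓ * z := pow_succ z ℓ
    have e2 : z ^ (N + 1) = z ^ N * z := pow_succ z N
    have e3 : (z : ℝ) ^ 1 = z := pow_one z
    field_simp
    ring_nf
  · rw [hJ, hα, hn]
    have e2 : z ^ (N + 1) = z ^ N * z := pow_succ z N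
    field_simp
    ring_nf
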